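/- For A(z) = c log(z₀ - z) with c > 0 as z → z₀⁻, the ansatz E(z) = E₀ (z₀ - z) e^{-A(z)} with E₀ = p²/((d-1)c + 1) solves the Riccati equation E' - e^A E² + dA'E + p² e^{-A} = 0 to leading order as z → z₀, and the integral ∫^{z₀} e^{A(z)} E(z) dz = ∫^{z₀} E₀ (z₀-z) dz is finite, so the corresponding fluctuation is IR-regular. -/

import Mathlib

open Filter Topology

/-- IR geometry `A(z) = c log(z₀ - z)` with `c > 0`, `z → z₀⁻`: the ansatz
`E = E₀ (z₀ - z) e^{-A}` with `E₀ = p²/((d-1)c + 1)` solves the Riccati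
equation `E' - e^A E² + dA'E + p² e^{-A} = 0` to leading order as `z → z₀⁻`,
and `∫^{z₀} e^A E dz = ∫^{z₀} E₀ (z₀ - z) dz` is finite, so the corresponding
fluctuation is IR-regular. -/
theorem IR_finite_endpoint_regularity (d : ℕ) (hd : 2 ≤ d) (c p2 z₀ z₁ : ℝ)
    (hc : 0 < c) (hp : 0 < p2) (hz : z₁ < z₀)
    (A E : ℝ → ℝ)
    (hA : ∀ z < z₀, A z = c * Real.log (z₀ - z))
    (hE : ∀ z < z₀, E z = (p2 / (((d : ℝ) - 1) * c + 1)) * (z₀ - z) * Real.exp (-(A z))) :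
    Tendsto (fun z => (z₀ - z) ^ c *
        (deriv E z - Real.exp (A z) * (E z) ^ 2 + (d : ℝ) * deriv A z * E z +
          p2 * Real.exp (-(A z))))
      (nhdsWithin z₀ (Set.Iio z₀)) (𝓝 0) ∧
    MeasureTheory.IntegrableOn (fun z => Real.exp (A z) * E z) (Set.Ioo z₁ z₀) := by
  set E₀ : ℝ := p2 / (((d : ℝ) - 1) * c + 1) with hE₀
  have hd1 : (1:ℝ) ≤ (d:ℝ) - 1 := by
    have : (2:ℝ) ≤ (d:ℝ) := by exact_mod_cast hd
    linarith
  have hD : (0:ℝ) < ((d : ℝ) - 1) * c + 1 := by nlinarith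
  have hDE : E₀ * (((d : ℝ) - 1) * c + 1) = p2 := by
    rw [hE₀]; field_simp [hD.ne']
  -- key pointwise computations on Iio z₀
  have hexpA : ∀ z ∈ Set.Iio z₀, Real.exp (A z) = (z₀ - z) ^ c := by
    intro z hz'
    have ht : 0 < z₀ - z := by simpa using hz'
    rw [hA z hz', Real.rpow_def_of_pos ht, mul_comm]
  have hexpnA : ∀ z ∈ Set.Iio z₀, Real.exp (-(A z)) = (z₀ - z) ^ (-c) := by
    intro z hz'
    have ht : 0 < z₀ - z := by simpa using hz'
    rw [hA z hz', Real.rpow_def_of_pos ht]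
    ring_nf
  have hEz : ∀ z ∈ Set.Iio z₀, E z = E₀ * (z₀ - z) ^ (1 - c) := by
    intro z hz'
    have ht : 0 < z₀ - z := by simpa using hz'
    rw [hE z hz', hexpnA z hz']
    rw [show (1 - c) = 1 + (-c) by ring, Real.rpow_add ht, Real.rpow_one]
    ring
  have hderivA : ∀ z ∈ Set.Iio z₀, deriv A z = c * (-1 / (z₀ - z)) := by
    intro z hz'
    have ht : 0 < z₀ - z := by simpa using hz'
    have heq : A =ᶠ[𝓝 z] fun w => c * Real.log (z₀ - w) := by
      filter_upwards [Iio_mem_nhds hz'] with w hw using hA w hw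
    rw [heq.deriv_eq]
    have h1 : HasDerivAt (fun w : ℝ => z₀ - w) (-1) z := by
      simpa using (hasDerivAt_id z).const_sub z₀
    have h2 := ((h1.log ht.ne').const_mul c)
    simpa using h2.deriv
  have hderivE : ∀ z ∈ Set.Iio z₀,
      deriv E z = E₀ * ((1 - c) * (z₀ - z) ^ (-c) * (-1)) := by
    intro z hz'
    have ht : 0 < z₀ - z := by simpa using hz'
    have heq : E =ᶠ[𝓝 z] fun w => E₀ * (z₀ - w) ^ (1 - c) := by
      filter_upwards [Iio_mem_nhds hz'] with w hw using hEz w hw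
    rw [heq.deriv_eq]
    have h1 : HasDerivAt (fun w : ℝ => z₀ - w) (-1) z := by
      simpa using (hasDerivAt_id z).const_sub z₀
    have h2 := (h1.rpow_const (p := 1 - c) (Or.inl ht.ne')).const_mul E₀
    rw [h2.deriv, show (1 - c - 1) = -c by ring]
    ring
  have key : ∀ z ∈ Set.Iio z₀,
      (z₀ - z) ^ c *
        (deriv E z - Real.exp (A z) * (E z) ^ 2 + (d : ℝ) * deriv A z * E z +
          p2 * Real.exp (-(A z))) = -E₀ ^ 2 * (z₀ - z) ^ 2 := by
    intro z hz'
    have ht : 0 < z₀ - z := by simpa using hz'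
    rw [hderivE z hz', hexpA z hz', hexpnA z hz', hderivA z hz', hEz z hz']
    have huv : (z₀ - z) ^ c * (z₀ - z) ^ (-c) = 1 := by
      rw [← Real.rpow_add ht]; simp
    have h1c : (z₀ - z) ^ (1 - c) = (z₀ - z) * (z₀ - z) ^ (-c) := by
      rw [show (1 - c) = 1 + (-c) by ring, Real.rpow_add ht, Real.rpow_one]
    rw [h1c]
    have htt : (-1 / (z₀ - z)) * (z₀ - z) = -1 := by field_simp
    linear_combination (-((z₀ - z) ^ c * (z₀ - z) ^ (-c))) * hDE +
      ((d : ℝ) * c * E₀ * ((z₀ - z) ^ c * (z₀ - z) ^ (-c))) * htt +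
      (-(E₀ ^ 2 * (z₀ - z) ^ 2 * ((z₀ - z) ^ c * (z₀ - z) ^ (-c) + 1))) * huv
  constructor
  · have h0 : Tendsto (fun z => -E₀ ^ 2 * (z₀ - z) ^ 2) (nhdsWithin z₀ (Set.Iio z₀))
        (𝓝 0) := by
      have : Tendsto (fun z : ℝ => -E₀ ^ 2 * (z₀ - z) ^ 2) (𝓝 z₀)
          (𝓝 (-E₀ ^ 2 * (z₀ - z₀) ^ 2)) :=
        (continuous_const.mul ((continuous_const.sub continuous_id).pow 2)).tendsto z₀
      simpa using this.mono_left nhdsWithin_le_nhds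
    refine h0.congr' ?_
    filter_upwards [self_mem_nhdsWithin] with z hz' using (key z hz').symm
  · have hcont : MeasureTheory.IntegrableOn (fun z => E₀ * (z₀ - z)) (Set.Ioo z₁ z₀) := by
      have hcts : Continuous fun z : ℝ => E₀ * (z₀ - z) := by fun_prop
      exact hcts.integrableOn_Icc.mono_set Set.Ioo_subset_Icc_self
    refine hcont.congr_fun ?_ measurableSet_Ioo
    intro z hz'
    have hz2 : z ∈ Set.Iio z₀ := hz'.2
    have ht : 0 < z₀ - z := by simpa using hz2
    simp only [hexpA z hz2, hEz z hz2]
    rw [show E₀ * (z₀ - z) ^ (1 - c) = E₀ * ((z₀ - z) * (z₀ - z) ^ (-c)) by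
      rw [show (1 - c) = 1 + (-c) by ring, Real.rpow_add ht, Real.rpow_one]]
    have huv : (z₀ - z) ^ c * (z₀ - z) ^ (-c) = 1 := by
      rw [← Real.rpow_add ht]; simp
    linear_combination (-(E₀ * (z₀ - z))) * huv
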